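/- Let n ∈ ℤ₊ and assume that φ is differentiable on (α,β) with φ′ extending to a function on [α,β] belonging to C_φ^{(n−2)} whenever n ≥ 2 (no condition if n ≤ 1). Then u ∈ C_φ^{(n)} if and only if, for each k = 0, 1, …, n, the function u is k-times differentiable on (α,β) and φ^k · ∂_t^k u extends to a continuous function on [α,β]. -/

import Mathlib

open Real Set Filter Topology

/-- The open interval `(α, β)` of real numbers, where `α β` are extended reals. -/
def EI (α β : EReal) : Set ℝ := {x : ℝ | α < (x : EReal) ∧ (x : EReal) < β}

/-- `u : ℝ → ℝ` (thought of as a function on `(α, β)`) extends to a continuous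
function on `[α, β] ⊆ EReal`. -/
def ContExt (α β : EReal) (u : ℝ → ℝ) : Prop :=
  ∃ g : EReal → ℝ, ContinuousOn g (Set.Icc α β) ∧
    ∀ x : ℝ, x ∈ EI α β → g (x : EReal) = u x

/-- The operator `X u := φ · u′`. -/
noncomputable def Xop (φ u : ℝ → ℝ) : ℝ → ℝ := fun x => φ x * deriv u x

/-- The iterates `X^k u`. -/
noncomputable def Xiter (φ : ℝ → ℝ) : ℕ → (ℝ → ℝ) → (ℝ → ℝ)
  | 0, u => u
  | n + 1, u => Xop φ (Xiter φ n u)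

/-- The space `C_φ^{(n)}`: inductively, `C_φ^{(0)}` consists of the functions having a
continuous extension to `[α, β]`, and `u ∈ C_φ^{(n+1)}` iff `u ∈ C_φ^{(n)}`, `X^n u` is
differentiable on `(α, β)`, and `X^{n+1} u` extends to a continuous function on `[α, β]`. -/
def CN (α β : EReal) (φ : ℝ → ℝ) : ℕ → Set (ℝ → ℝ)
  | 0 => {u | ContExt α β u}
  | n + 1 => {u | u ∈ CN α β φ n ∧
      (∀ x ∈ EI α β, DifferentiableAt ℝ (Xiter φ n u) x) ∧
      ContExt α β (Xiter φ (n + 1) u)}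

/-- The space `C_φ^{(∞)} := ⋂ₙ C_φ^{(n)}`. -/
def Cinf (α β : EReal) (φ : ℝ → ℝ) : Set (ℝ → ℝ) := ⋂ n : ℕ, CN α β φ n

/-- The spaces `C_φ^{(n)}` for `n ∈ ℤ₊ ∪ {∞}`. -/
def CNE (α β : EReal) (φ : ℝ → ℝ) (n : ℕ∞) : Set (ℝ → ℝ) :=
  WithTop.recTopCoe (Cinf α β φ) (fun k => CN α β φ k) n

section helpers

variable {α β : EReal} {φ : ℝ → ℝ}

lemma EI_open (α β : EReal) : IsOpen (EI α β) := by
  have h : EI α β = ((↑) : ℝ → EReal) ⁻¹' (Set.Ioo α β) := rfl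
  rw [h]
  exact isOpen_Ioo.preimage continuous_coe_real_ereal

lemma EI_mem_nhds {x : ℝ} (hx : x ∈ EI α β) : EI α β ∈ 𝓝 x :=
  (EI_open α β).mem_nhds hx

lemma eventuallyEq_of_eqOn {u v : ℝ → ℝ} (h : Set.EqOn u v (EI α β)) {x : ℝ}
    (hx : x ∈ EI α β) : u =ᶠ[𝓝 x] v :=
  h.eventuallyEq_of_mem (EI_mem_nhds hx)

lemma ContExt.congr {u v : ℝ → ℝ} (h : ContExt α β u) (he : Set.EqOn u v (EI α β)) :
    ContExt α β v := by
  obtain ⟨g, hg, hgu⟩ := h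
  exact ⟨g, hg, fun x hx => (hgu x hx).trans (he hx)⟩

lemma ContExt.add {u v : ℝ → ℝ} (hu : ContExt α β u) (hv : ContExt α β v) :
    ContExt α β (fun x => u x + v x) := by
  obtain ⟨g, hg, hgu⟩ := hu
  obtain ⟨g', hg', hgv⟩ := hv
  exact ⟨fun y => g y + g' y, hg.add hg', fun x hx => by simp [hgu x hx, hgv x hx]⟩

lemma ContExt.mul {u v : ℝ → ℝ} (hu : ContExt α β u) (hv : ContExt α β v) :
    ContExt α β (fun x => u x * v x) := by
  obtain ⟨g, hg, hgu⟩ := hu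
  obtain ⟨g', hg', hgv⟩ := hv
  exact ⟨fun y => g y * g' y, hg.mul hg', fun x hx => by simp [hgu x hx, hgv x hx]⟩

lemma contExt_const (c : ℝ) : ContExt α β (fun _ => c) :=
  ⟨fun _ => c, continuousOn_const, fun _ _ => rfl⟩

lemma ContExt.neg {u : ℝ → ℝ} (hu : ContExt α β u) : ContExt α β (fun x => -u x) := by
  simpa using (contExt_const (α := α) (β := β) (-1)).mul hu

lemma ContExt.sub {u v : ℝ → ℝ} (hu : ContExt α β u) (hv : ContExt α β v) :
    ContExt α β (fun x => u x - v x) := by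
  simpa [sub_eq_add_neg] using hu.add hv.neg

lemma contExt_sum {ι : Type*} (s : Finset ι) (f : ι → ℝ → ℝ)
    (h : ∀ i ∈ s, ContExt α β (f i)) :
    ContExt α β (fun x => ∑ i ∈ s, f i x) := by
  classical
  induction s using Finset.cons_induction with
  | empty => simpa using contExt_const (α := α) (β := β) 0
  | cons a s ha ih =>
    simp only [Finset.sum_cons]
    exact (h a (Finset.mem_cons_self a s)).add
      (ih fun i hi => h i (Finset.mem_cons_of_mem hi))

lemma Xop_congr {u v : ℝ → ℝ} (h : Set.EqOn u v (EI α β)) :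
    Set.EqOn (Xop φ u) (Xop φ v) (EI α β) := fun x hx => by
  simp only [Xop]
  rw [(eventuallyEq_of_eqOn h hx).deriv_eq]

lemma Xiter_congr {u v : ℝ → ℝ} (h : Set.EqOn u v (EI α β)) (k : ℕ) :
    Set.EqOn (Xiter φ k u) (Xiter φ k v) (EI α β) := by
  induction k with
  | zero => exact h
  | succ k ih => exact Xop_congr ih

lemma Xiter_shift (k : ℕ) (u : ℝ → ℝ) : Xiter φ k (Xop φ u) = Xiter φ (k + 1) u := by
  induction k with
  | zero => rfl
  | succ k ih => show Xop φ (Xiter φ k (Xop φ u)) = _; rw [ih]; rfl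

lemma CN_succ_iff (m : ℕ) (u : ℝ → ℝ) :
    u ∈ CN α β φ (m + 1) ↔
      ContExt α β u ∧ (∀ x ∈ EI α β, DifferentiableAt ℝ u x) ∧ Xop φ u ∈ CN α β φ m := by
  induction m generalizing u with
  | zero =>
    show (ContExt α β u ∧ _ ∧ _) ↔ _
    constructor
    · rintro ⟨h1, h2, h3⟩; exact ⟨h1, h2, h3⟩
    · rintro ⟨h1, h2, h3⟩; exact ⟨h1, h2, h3⟩
  | succ m ih =>
    constructor
    · rintro ⟨h1, h2, h3⟩
      obtain ⟨c1, c2, c3⟩ := (ih u).mp h1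
      refine ⟨c1, c2, ?_⟩
      refine ⟨c3, ?_, ?_⟩
      · rw [Xiter_shift]; exact h2
      · rw [Xiter_shift]; exact h3
    · rintro ⟨c1, c2, ⟨c3, c4, c5⟩⟩
      refine ⟨(ih u).mpr ⟨c1, c2, c3⟩, ?_, ?_⟩
      · rw [← Xiter_shift]; exact c4
      · rw [← Xiter_shift]; exact c5

lemma CN_mono {m : ℕ} {u : ℝ → ℝ} (h : u ∈ CN α β φ (m + 1)) : u ∈ CN α β φ m := h.1

lemma CN_le {m m' : ℕ} (hm : m' ≤ m) {u : ℝ → ℝ} (h : u ∈ CN α β φ m) :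
    u ∈ CN α β φ m' := by
  induction hm with
  | refl => exact h
  | @step k hk ih => exact ih (CN_mono h)

lemma CN_contExt {m : ℕ} {u : ℝ → ℝ} (h : u ∈ CN α β φ m) : ContExt α β u :=
  CN_le (Nat.zero_le m) h

lemma CN_diff {m : ℕ} {u : ℝ → ℝ} (h : u ∈ CN α β φ (m + 1)) :
    ∀ x ∈ EI α β, DifferentiableAt ℝ u x :=
  ((CN_succ_iff 0 u).mp (CN_le (Nat.succ_le_succ (Nat.zero_le m)) h)).2.1

lemma CN_Xop {m : ℕ} {u : ℝ → ℝ} (h : u ∈ CN α β φ (m + 1)) : Xop φ u ∈ CN α β φ m :=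
  ((CN_succ_iff m u).mp h).2.2

lemma CN_congr {m : ℕ} {u v : ℝ → ℝ} (h : u ∈ CN α β φ m)
    (he : Set.EqOn u v (EI α β)) : v ∈ CN α β φ m := by
  induction m generalizing u v with
  | zero => exact ContExt.congr h he
  | succ m ih =>
    rw [CN_succ_iff] at h ⊢
    obtain ⟨h1, h2, h3⟩ := h
    refine ⟨h1.congr he, fun x hx => ?_, ih h3 (Xop_congr he)⟩
    exact ((eventuallyEq_of_eqOn he hx).differentiableAt_iff).mp (h2 x hx)

lemma CN_const (m : ℕ) (c : ℝ) : (fun _ : ℝ => c) ∈ CN α β φ m := by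
  induction m generalizing c with
  | zero => exact contExt_const c
  | succ m ih =>
    rw [CN_succ_iff]
    refine ⟨contExt_const c, fun x _ => differentiableAt_const c, ?_⟩
    have h : Xop φ (fun _ : ℝ => c) = fun _ : ℝ => (0 : ℝ) := by
      funext x; simp [Xop]
    rw [h]; exact ih 0

lemma CN_add {m : ℕ} {u v : ℝ → ℝ} (hu : u ∈ CN α β φ m) (hv : v ∈ CN α β φ m) :
    (fun x => u x + v x) ∈ CN α β φ m := by
  induction m generalizing u v with
  | zero => exact ContExt.add hu hv
  | succ m ih =>
    rw [CN_succ_iff] at hu hv ⊢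
    obtain ⟨u1, u2, u3⟩ := hu
    obtain ⟨v1, v2, v3⟩ := hv
    refine ⟨u1.add v1, fun x hx => (u2 x hx).add (v2 x hx), ?_⟩
    refine CN_congr (ih u3 v3) (fun x hx => ?_)
    simp only [Xop]
    rw [show deriv (fun x => u x + v x) x = deriv u x + deriv v x from
      deriv_add (u2 x hx) (v2 x hx)]
    ring

lemma CN_mul {m : ℕ} {u v : ℝ → ℝ} (hu : u ∈ CN α β φ m) (hv : v ∈ CN α β φ m) :
    (fun x => u x * v x) ∈ CN α β φ m := by
  induction m generalizing u v with
  | zero => exact ContExt.mul hu hv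
  | succ m ih =>
    have hu' := (CN_succ_iff m u).mp hu
    have hv' := (CN_succ_iff m v).mp hv
    rw [CN_succ_iff]
    refine ⟨hu'.1.mul hv'.1, fun x hx => (hu'.2.1 x hx).mul (hv'.2.1 x hx), ?_⟩
    have h1 : (fun x => Xop φ u x * v x + u x * Xop φ v x) ∈ CN α β φ m :=
      CN_add (ih hu'.2.2 (CN_mono hv)) (ih (CN_mono hu) hv'.2.2)
    refine CN_congr h1 (fun x hx => ?_)
    simp only [Xop]
    rw [show deriv (fun x => u x * v x) x = deriv u x * v x + u x * deriv v x from
      deriv_mul (hu'.2.1 x hx) (hv'.2.1 x hx)]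
    ring

end helpers
noncomputable def coefs (φ : ℝ → ℝ) : ℕ → ℕ → (ℝ → ℝ)
  | 0, 0 => fun _ => 1
  | 0, _ + 1 => fun _ => 0
  | _ + 1, 0 => fun _ => 0
  | k + 1, j + 1 => fun x =>
      Xop φ (coefs φ k (j + 1)) x + ((j : ℝ) + 1) * deriv φ x * coefs φ k (j + 1) x +
        coefs φ k j x

section coefslemmas

variable {α β : EReal} {φ : ℝ → ℝ}

lemma coefs_succ_succ (k j : ℕ) : coefs φ (k + 1) (j + 1) = fun x =>
    Xop φ (coefs φ k (j + 1)) x + ((j : ℝ) + 1) * deriv φ x * coefs φ k (j + 1) x +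
      coefs φ k j x := rfl

lemma coefs_of_lt : ∀ {k j : ℕ}, k < j → coefs φ k j = fun _ => 0 := by
  intro k
  induction k with
  | zero => intro j hj; obtain ⟨j', rfl⟩ := Nat.exists_eq_add_of_lt hj; rfl
  | succ k ih =>
    intro j hj
    obtain ⟨j', rfl⟩ : ∃ j', j = j' + 1 := ⟨j - 1, by omega⟩
    have h1 : coefs φ k (j' + 1) = fun _ => (0 : ℝ) := ih (by omega)
    have h2 : coefs φ k j' = fun _ => (0 : ℝ) := ih (by omega)
    rw [coefs_succ_succ, h1, h2]
    funext x
    simp [Xop]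

lemma coefs_diag : ∀ k : ℕ, coefs φ k k = fun _ => 1 := by
  intro k
  induction k with
  | zero => rfl
  | succ k ih =>
    have h1 : coefs φ k (k + 1) = fun _ => (0 : ℝ) := coefs_of_lt (by omega)
    rw [coefs_succ_succ, h1, ih]
    funext x
    simp [Xop]

lemma coefs_zero_right : ∀ k : ℕ, (0 : ℕ) < k → coefs φ k 0 = fun _ => (0 : ℝ) := by
  intro k hk
  obtain ⟨k', rfl⟩ : ∃ k', k = k' + 1 := ⟨k - 1, by omega⟩
  rfl

lemma coefs_mem {p : ℕ} (hp : deriv φ ∈ CN α β φ p) :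
    ∀ k j, k ≤ p + 1 + j → coefs φ k j ∈ CN α β φ (p + 1 + j - k) := by
  intro k
  induction k with
  | zero =>
    intro j _
    match j with
    | 0 => exact CN_const _ 1
    | j + 1 => exact CN_const _ 0
  | succ k ih =>
    intro j hk
    match j with
    | 0 => rw [coefs_zero_right (k + 1) (by omega)]; exact CN_const _ 0
    | j + 1 =>
      rcases lt_trichotomy (k + 1) (j + 1) with h | h | h
      · rw [coefs_of_lt h]; exact CN_const _ 0
      · rw [h, coefs_diag]; exact CN_const _ 1
      · -- j + 1 ≤ k
        have hjk : j + 1 ≤ k := by omega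
        have hq : p + 1 + (j + 1) - (k + 1) = p + 1 + j - k := by omega
        rw [hq, coefs_succ_succ]
        have hA : coefs φ k (j + 1) ∈ CN α β φ (p + 1 + j - k + 1) := by
          have := ih (j + 1) (by omega)
          have he : p + 1 + (j + 1) - k = p + 1 + j - k + 1 := by omega
          rwa [he] at this
        have hB : coefs φ k j ∈ CN α β φ (p + 1 + j - k) := ih j (by omega)
        have hφ' : deriv φ ∈ CN α β φ (p + 1 + j - k) := CN_le (by omega) hp
        exact CN_add (CN_add (CN_Xop hA)
          (CN_mul (CN_mul (CN_const _ ((j : ℝ) + 1)) hφ') (CN_mono hA))) hB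

lemma coefs_diff {p : ℕ} (hp : deriv φ ∈ CN α β φ p) :
    ∀ k j, k ≤ p + 1 → ∀ x ∈ EI α β, DifferentiableAt ℝ (coefs φ k j) x := by
  intro k j hk x hx
  match j with
  | 0 =>
    match k with
    | 0 => exact differentiableAt_const 1
    | k + 1 => rw [coefs_zero_right (k + 1) (by omega)]; exact differentiableAt_const 0
  | j + 1 =>
    rcases lt_or_ge k (j + 1) with h | h
    · rw [coefs_of_lt h]; exact differentiableAt_const 0
    · have hm : coefs φ k (j + 1) ∈ CN α β φ (p + 1 + (j + 1) - k) :=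
        coefs_mem hp k (j + 1) (by omega)
      have h1 : 1 ≤ p + 1 + (j + 1) - k := by omega
      obtain ⟨m, hm'⟩ : ∃ m, p + 1 + (j + 1) - k = m + 1 := ⟨p + (j + 1) - k, by omega⟩
      rw [hm'] at hm
      exact CN_diff hm x hx

lemma coefs_contExt {p : ℕ} (hp : deriv φ ∈ CN α β φ p) :
    ∀ k j, k ≤ p + 2 → ContExt α β (coefs φ k j) := by
  intro k j hk
  match j with
  | 0 =>
    match k with
    | 0 => exact contExt_const 1
    | k + 1 => rw [coefs_zero_right (k + 1) (by omega)]; exact contExt_const 0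
  | j + 1 => exact CN_contExt (coefs_mem hp k (j + 1) (by omega))

end coefslemmas
section expand

variable {α β : EReal} {φ : ℝ → ℝ}

noncomputable def Sfun (φ u : ℝ → ℝ) (k : ℕ) : ℝ → ℝ := fun x =>
  ∑ j ∈ Finset.range (k + 1), coefs φ k j x * (φ x ^ j * iteratedDeriv j u x)

lemma coefs_zero_zero : coefs φ 0 0 = fun _ => (1 : ℝ) := rfl

lemma coefs_deriv_zero (k : ℕ) (x : ℝ) : deriv (coefs φ k 0) x = 0 := by
  match k with
  | 0 => rw [coefs_zero_zero]; simp
  | k + 1 => rw [coefs_zero_right (k + 1) (by omega)]; simp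

lemma expand (hφd : ∀ x ∈ EI α β, DifferentiableAt ℝ φ x) {p : ℕ}
    (hp : deriv φ ∈ CN α β φ p) (u : ℝ → ℝ) :
    ∀ k, k ≤ p + 2 → (∀ i < k, ∀ x ∈ EI α β, DifferentiableAt ℝ (iteratedDeriv i u) x) →
      Set.EqOn (Xiter φ k u) (Sfun φ u k) (EI α β) := by
  intro k
  induction k with
  | zero =>
    intro _ _ x hx
    simp [Xiter, Sfun, coefs_zero_zero]
  | succ k ih =>
    intro hk hu x hx
    have ihe : Set.EqOn (Xiter φ k u) (Sfun φ u k) (EI α β) :=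
      ih (by omega) (fun i hi => hu i (by omega))
    -- differentiability facts at x
    have hcd : ∀ j, DifferentiableAt ℝ (coefs φ k j) x :=
      fun j => coefs_diff hp k j (by omega) x hx
    have hud : ∀ j, j ≤ k → DifferentiableAt ℝ (iteratedDeriv j u) x :=
      fun j hj => hu j (by omega) x hx
    -- pointwise abbreviations
    set c : ℕ → ℝ := fun j => coefs φ k j x with hc
    set c' : ℕ → ℝ := fun j => deriv (coefs φ k j) x with hc'
    set v : ℕ → ℝ := fun j => iteratedDeriv j u x with hv
    set D : ℕ → ℝ := fun j => c' j * (φ x ^ j * v j) +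
      c j * (((j : ℝ) * φ x ^ (j - 1) * deriv φ x) * v j + φ x ^ j * v (j + 1)) with hD
    set T1 : ℕ → ℝ := fun j =>
      (φ x * c' j + (j : ℝ) * deriv φ x * c j) * (φ x ^ j * v j) with hT1
    set T2 : ℕ → ℝ := fun j => c j * (φ x ^ (j + 1) * v (j + 1)) with hT2
    -- derivative of each summand
    have hterm : ∀ j ∈ Finset.range (k + 1), HasDerivAt
        (fun y => coefs φ k j y * (φ y ^ j * iteratedDeriv j u y)) (D j) x := by
      intro j hj
      have h1 : HasDerivAt (fun y => φ y ^ j * iteratedDeriv j u y)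
          (((j : ℝ) * φ x ^ (j - 1) * deriv φ x) * v j + φ x ^ j * v (j + 1)) x := by
        have hpow : HasDerivAt (fun y => φ y ^ j) ((j : ℝ) * φ x ^ (j - 1) * deriv φ x) x :=
          (hφd x hx).hasDerivAt.pow j
        have hiter : HasDerivAt (iteratedDeriv j u) (v (j + 1)) x := by
          have h := (hud j (by simpa using Nat.lt_succ_iff.mp (Finset.mem_range.mp hj))).hasDerivAt
          show HasDerivAt (iteratedDeriv j u) (iteratedDeriv (j + 1) u x) x
          rw [iteratedDeriv_succ]
          exact h
        exact hpow.mul hiter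
      exact (hcd j).hasDerivAt.mul h1
    have hS : HasDerivAt (Sfun φ u k) (∑ j ∈ Finset.range (k + 1), D j) x :=
      HasDerivAt.fun_sum hterm
    have hderiv : deriv (Xiter φ k u) x = ∑ j ∈ Finset.range (k + 1), D j := by
      rw [(eventuallyEq_of_eqOn ihe hx).deriv_eq]
      exact hS.deriv
    -- LHS computation
    have hLHS : Xiter φ (k + 1) u x =
        (∑ j ∈ Finset.range k, T1 (j + 1)) + ∑ j ∈ Finset.range (k + 1), T2 j := by
      show φ x * deriv (Xiter φ k u) x = _
      rw [hderiv, Finset.mul_sum]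
      have hsplit : ∀ j ∈ Finset.range (k + 1), φ x * D j = T1 j + T2 j := by
        intro j _
        match j with
        | 0 => simp [hD, hT1, hT2]; ring
        | m + 1 =>
          simp only [hD, hT1, hT2, Nat.add_sub_cancel]
          push_cast
          rw [pow_succ]
          ring
      rw [Finset.sum_congr rfl hsplit, Finset.sum_add_distrib]
      congr 1
      rw [Finset.sum_range_succ']
      have hT10 : T1 0 = 0 := by
        simp [hT1, hc', coefs_deriv_zero]
      rw [hT10, add_zero]
    -- RHS computation
    have hRHS : Sfun φ u (k + 1) x =
        (∑ j ∈ Finset.range k, T1 (j + 1)) + ∑ j ∈ Finset.range (k + 1), T2 j := by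
      show (∑ j ∈ Finset.range (k + 1 + 1), coefs φ (k + 1) j x *
        (φ x ^ j * iteratedDeriv j u x)) = _
      rw [Finset.sum_range_succ']
      rw [show coefs φ (k + 1) 0 = fun _ => (0 : ℝ) from coefs_zero_right (k + 1) (by omega)]
      simp only [zero_mul, add_zero]
      have hterm2 : ∀ j ∈ Finset.range (k + 1), coefs φ (k + 1) (j + 1) x *
          (φ x ^ (j + 1) * iteratedDeriv j.succ u x) = T1 (j + 1) + T2 j := by
        intro j _
        rw [coefs_succ_succ]
        show (Xop φ (coefs φ k (j + 1)) x + ((j : ℝ) + 1) * deriv φ x * coefs φ k (j + 1) x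
            + coefs φ k j x) * (φ x ^ (j + 1) * iteratedDeriv (j + 1) u x) = _
        simp only [hT1, hT2, hc, hc', hv, Xop]
        push_cast
        ring
      rw [Finset.sum_congr rfl hterm2, Finset.sum_add_distrib]
      congr 1
      rw [Finset.sum_range_succ]
      have hT1k : T1 (k + 1) = 0 := by
        have hz : coefs φ k (k + 1) = fun _ => (0 : ℝ) := coefs_of_lt (by omega)
        simp [hT1, hc, hc', hz]
      rw [hT1k, add_zero]
    rw [hLHS, hRHS]

end expand
section main

variable {α β : EReal} {φ : ℝ → ℝ}

/-- Solve the expansion identity for the top-order term. -/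
lemma solve_top {u : ℝ → ℝ} {K : ℕ}
    (hexp : Set.EqOn (Xiter φ K u) (Sfun φ u K) (EI α β)) :
    ∀ y ∈ EI α β, φ y ^ K * iteratedDeriv K u y =
      Xiter φ K u y -
        ∑ j ∈ Finset.range K, coefs φ K j y * (φ y ^ j * iteratedDeriv j u y) := by
  intro y hy
  have h := hexp hy
  simp only [Sfun, Finset.sum_range_succ, coefs_diag] at h
  rw [h]; ring

lemma main_aux (α β : EReal) (φ : ℝ → ℝ)
    (hφpos : ∀ x ∈ EI α β, 0 < φ x) :
    ∀ n : ℕ,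
      (2 ≤ n → (∀ x ∈ EI α β, DifferentiableAt ℝ φ x) ∧ deriv φ ∈ CN α β φ (n - 2)) →
      ∀ u : ℝ → ℝ,
        (u ∈ CN α β φ n ↔
          ∀ k ≤ n,
            (∀ i < k, ∀ x ∈ EI α β, DifferentiableAt ℝ (iteratedDeriv i u) x) ∧
              ContExt α β (fun x => φ x ^ k * iteratedDeriv k u x)) := by
  intro n
  induction n with
  | zero =>
    intro _ u
    have he : (fun x => φ x ^ 0 * iteratedDeriv 0 u x) = u := by
      funext x; simp
    constructor
    · intro h k hk
      interval_cases k
      exact ⟨fun i hi => absurd hi (by omega), by rw [he]; exact h⟩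
    · intro h
      have := (h 0 le_rfl).2
      rw [he] at this
      exact this
  | succ n ih =>
    match n, ih with
    | 0, _ =>
      intro _ u
      have he0 : (fun x => φ x ^ 0 * iteratedDeriv 0 u x) = u := by funext x; simp
      have he1 : (fun x => φ x ^ 1 * iteratedDeriv 1 u x) = Xiter φ 1 u := by
        funext x; simp [Xiter, Xop, iteratedDeriv_one]
      have he2 : iteratedDeriv 0 u = u := iteratedDeriv_zero
      constructor
      · rintro ⟨h1, h2, h3⟩ k hk
        interval_cases k
        · exact ⟨fun i hi => absurd hi (by omega), by rw [he0]; exact h1⟩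
        · refine ⟨fun i hi => ?_, by rw [he1]; exact h3⟩
          interval_cases i
          rw [he2]; exact h2
      · intro h
        have h0 := (h 0 (by omega)).2
        have h1 := h 1 le_rfl
        rw [he0] at h0
        rw [he1] at h1
        refine ⟨h0, fun x hx => ?_, h1.2⟩
        have := h1.1 0 (by omega) x hx
        rwa [he2] at this
    | m + 1, ih =>
      intro hφ' u
      obtain ⟨hφd, hp⟩ := hφ' (by omega)
      have hp' : deriv φ ∈ CN α β φ m := by
        have : m + 1 + 1 - 2 = m := by omega
        rwa [this] at hp
      have ihu := ih (fun _ => ⟨hφd, CN_le (by omega) hp'⟩) u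
      constructor
      · -- forward direction
        rintro ⟨h1, h2, h3⟩
        have R := ihu.mp h1
        -- differentiability of iteratedDeriv i u for i < m + 1
        have hRd : ∀ i < m + 1, ∀ x ∈ EI α β, DifferentiableAt ℝ (iteratedDeriv i u) x :=
          (R (m + 1) le_rfl).1
        -- expansion at level m + 1
        have hexp1 : Set.EqOn (Xiter φ (m + 1) u) (Sfun φ u (m + 1)) (EI α β) :=
          expand hφd hp' u (m + 1) (by omega) hRd
        have key1 := solve_top (α := α) (β := β) hexp1
        -- differentiability of iteratedDeriv (m + 1) u
        have hdtop : ∀ x ∈ EI α β, DifferentiableAt ℝ (iteratedDeriv (m + 1) u) x := by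
          intro x hx
          set g : ℝ → ℝ := fun y =>
            (Xiter φ (m + 1) u y -
              ∑ j ∈ Finset.range (m + 1), coefs φ (m + 1) j y *
                (φ y ^ j * iteratedDeriv j u y)) * (φ y ^ (m + 1))⁻¹ with hg
          have hEq : Set.EqOn (iteratedDeriv (m + 1) u) g (EI α β) := by
            intro y hy
            have hk := key1 y hy
            have hφ0 : φ y ^ (m + 1) ≠ 0 := pow_ne_zero _ (ne_of_gt (hφpos y hy))
            rw [hg]
            show iteratedDeriv (m + 1) u y = (Xiter φ (m + 1) u y - _) * _
            rw [← hk]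
            field_simp
          have hgdiff : DifferentiableAt ℝ g x := by
            have hd1 : DifferentiableAt ℝ (fun y =>
                Xiter φ (m + 1) u y -
                  ∑ j ∈ Finset.range (m + 1), coefs φ (m + 1) j y *
                    (φ y ^ j * iteratedDeriv j u y)) x := by
              refine (h2 x hx).sub (DifferentiableAt.fun_sum fun j hj => ?_)
              have hj' : j < m + 1 := Finset.mem_range.mp hj
              exact (coefs_diff hp' (m + 1) j (by omega) x hx).mul
                (((hφd x hx).pow j).mul (hRd j hj' x hx))
            exact hd1.mul (((hφd x hx).pow (m + 1)).inv
              (pow_ne_zero _ (ne_of_gt (hφpos x hx))))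
          exact ((eventuallyEq_of_eqOn hEq hx).differentiableAt_iff).mpr hgdiff
        have hRd2 : ∀ i < m + 2, ∀ x ∈ EI α β, DifferentiableAt ℝ (iteratedDeriv i u) x := by
          intro i hi x hx
          rcases lt_or_ge i (m + 1) with h | h
          · exact hRd i h x hx
          · have : i = m + 1 := by omega
            rw [this]; exact hdtop x hx
        -- expansion at level m + 2
        have hexp2 : Set.EqOn (Xiter φ (m + 2) u) (Sfun φ u (m + 2)) (EI α β) :=
          expand hφd hp' u (m + 2) (by omega) hRd2
        have key2 := solve_top (α := α) (β := β) hexp2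
        -- ContExt of the top power
        have hctop : ContExt α β (fun x => φ x ^ (m + 2) * iteratedDeriv (m + 2) u x) := by
          have hF : ContExt α β (fun y =>
              Xiter φ (m + 2) u y -
                ∑ j ∈ Finset.range (m + 2), coefs φ (m + 2) j y *
                  (φ y ^ j * iteratedDeriv j u y)) := by
            refine ContExt.sub h3 (contExt_sum _ _ fun j hj => ?_)
            have hj' : j < m + 2 := Finset.mem_range.mp hj
            exact (coefs_contExt hp' (m + 2) j (by omega)).mul (R j (by omega)).2
          exact hF.congr (fun y hy => (key2 y hy).symm)
        intro k hk
        rcases lt_or_ge k (m + 2) with h | h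
        · exact R k (by omega)
        · have hkm : k = m + 2 := by omega
          subst hkm
          exact ⟨hRd2, hctop⟩
      · -- backward direction
        intro h
        have hRd2 : ∀ i < m + 2, ∀ x ∈ EI α β, DifferentiableAt ℝ (iteratedDeriv i u) x :=
          (h (m + 2) le_rfl).1
        have h1 : u ∈ CN α β φ (m + 1) :=
          ihu.mpr (fun k hk => h k (by omega))
        have hexp1 : Set.EqOn (Xiter φ (m + 1) u) (Sfun φ u (m + 1)) (EI α β) :=
          expand hφd hp' u (m + 1) (by omega) (fun i hi => hRd2 i (by omega))
        have hexp2 : Set.EqOn (Xiter φ (m + 2) u) (Sfun φ u (m + 2)) (EI α β) :=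
          expand hφd hp' u (m + 2) (by omega) hRd2
        refine ⟨h1, fun x hx => ?_, ?_⟩
        · -- differentiability of Xiter (m+1) u
          have hSdiff : DifferentiableAt ℝ (Sfun φ u (m + 1)) x := by
            refine DifferentiableAt.fun_sum fun j hj => ?_
            have hj' : j < m + 2 := Finset.mem_range.mp hj
            exact (coefs_diff hp' (m + 1) j (by omega) x hx).mul
              (((hφd x hx).pow j).mul (hRd2 j (by omega) x hx))
          exact ((eventuallyEq_of_eqOn hexp1 hx).differentiableAt_iff).mpr hSdiff
        · -- ContExt of Xiter (m+2) u
          have hSext : ContExt α β (Sfun φ u (m + 2)) := by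
            refine contExt_sum _ _ fun j hj => ?_
            have hj' : j < m + 3 := Finset.mem_range.mp hj
            exact (coefs_contExt hp' (m + 2) j (by omega)).mul (h j (by omega)).2
          exact hSext.congr (fun y hy => (hexp2 hy).symm)

end main


/-- assume `φ′` extends to a function on `[α,β]` belonging to `C_φ^{(n−2)}`
whenever `n ≥ 2`.  Then `u ∈ C_φ^{(n)}` iff for each `k = 0, …, n` the function `u` is
`k`-times differentiable on `(α,β)` and `φ^k ∂_t^k u` extends to a continuous function
on `[α,β]`. -/
theorem mem_CN_iff_powers (α β : EReal) (hαβ : α < β) (φ : ℝ → ℝ)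
    (hφc : ContinuousOn φ (EI α β)) (hφpos : ∀ x ∈ EI α β, 0 < φ x)
    (n : ℕ)
    (hφ' : 2 ≤ n → (∀ x ∈ EI α β, DifferentiableAt ℝ φ x) ∧
      deriv φ ∈ CN α β φ (n - 2))
    (u : ℝ → ℝ) :
    u ∈ CN α β φ n ↔
      ∀ k ≤ n,
        (∀ i < k, ∀ x ∈ EI α β, DifferentiableAt ℝ (iteratedDeriv i u) x) ∧
          ContExt α β (fun x => φ x ^ k * iteratedDeriv k u x) := by
  exact main_aux α β φ hφpos n hφ' u
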